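/- For n > 0 and 0 ≤ i + j < n, the numbers K(n,i,j) satisfy the recurrence K(n,i,j) = (i+j+1)[K(n−1,i,j) + K(n−1,i,j−1)] + (n−i−j)[K(n−1,i−1,j) + K(n−1,i−1,j−1)], with the convention K(m,a,b) = 0 when a < 0, b < 0, or a + b ≥ m. -/

import Mathlib

open Finset

/-- A segmented permutation of size `n`: a permutation of `Fin n` together with a
set of barred gaps among the `n-1` gaps between consecutive positions. -/
abbrev SegPerm (n : ℕ) := Equiv.Perm (Fin n) × Finset (Fin (n - 1))

/-- The left endpoint of gap `i`, as an element of `Fin n`. -/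
def gapL {n : ℕ} (i : Fin (n - 1)) : Fin n := ⟨i.1, by have := i.2; omega⟩

/-- The right endpoint of gap `i`, as an element of `Fin n`. -/
def gapR {n : ℕ} (i : Fin (n - 1)) : Fin n := ⟨i.1 + 1, by have := i.2; omega⟩

/-- Number of descents of a segmented permutation: gaps that are not barred and
where the value decreases. -/
def desNum {n : ℕ} (π : SegPerm n) : ℕ :=
  (univ.filter (fun i : Fin (n - 1) => i ∉ π.2 ∧ π.1 (gapR i) < π.1 (gapL i))).card

/-- Number of bars of a segmented permutation. -/
def segNum {n : ℕ} (π : SegPerm n) : ℕ := π.2.card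

/-- Number of descents of an ordinary permutation. -/
def permDes {n : ℕ} (σ : Equiv.Perm (Fin n)) : ℕ :=
  (univ.filter (fun i : Fin (n - 1) => σ (gapR i) < σ (gapL i))).card

/-- The Eulerian number `A(n,k)`. -/
def eulerian (n k : ℕ) : ℕ :=
  ((univ : Finset (Equiv.Perm (Fin n))).filter (fun σ => permDes σ = k)).card

/-- `K(n,i,j)`: number of segmented permutations of size `n` with `i` descents
and `j` bars. -/
def Knum (n i j : ℕ) : ℕ :=
  ((univ : Finset (SegPerm n)).filter (fun π => desNum π = i ∧ segNum π = j)).card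

/-- `K(n,i,j)` with integer indices; it vanishes for negative indices. -/
def Kint (n : ℕ) (i j : ℤ) : ℤ :=
  (((univ : Finset (SegPerm n)).filter
      (fun π => (desNum π : ℤ) = i ∧ (segNum π : ℤ) = j)).card : ℤ)

/-- `T(n,k)`: number of segmented permutations of size `n` with `k` descents. -/
def Tnum (n k : ℕ) : ℕ :=
  ((univ : Finset (SegPerm n)).filter (fun π => desNum π = k)).card

/-- `T(n,k)` with an integer index; it vanishes for negative indices. -/
def Tint (n : ℕ) (k : ℤ) : ℤ :=
  (((univ : Finset (SegPerm n)).filter (fun π => (desNum π : ℤ) = k)).card : ℤ)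

/-- Stirling numbers of the second kind. -/
def stirling : ℕ → ℕ → ℕ
  | 0, 0 => 1
  | 0, _ + 1 => 0
  | _ + 1, 0 => 0
  | n + 1, k + 1 => (k + 1) * stirling n (k + 1) + stirling n k

/-- The generalized Eulerian polynomial `α_n(t,q)`, as a function of real arguments. -/
noncomputable def alphaF (n : ℕ) (t q : ℝ) : ℝ :=
  ∑ π : SegPerm n, t ^ desNum π * q ^ segNum π

namespace KRec
variable {m : ℕ}

def qp (p : Fin (m + 2)) : Fin (m + 1) := ⟨p.1 - 1, by omega⟩

def insPerm (p : Fin (m + 2)) (τ : Equiv.Perm (Fin (m + 1))) : Equiv.Perm (Fin (m + 2)) :=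
  ((finSuccEquiv' p).trans (Equiv.optionCongr τ)).trans (finSuccEquiv' (Fin.last (m + 1))).symm

lemma insPerm_self (p : Fin (m + 2)) (τ : Equiv.Perm (Fin (m + 1))) :
    insPerm p τ p = Fin.last (m + 1) := by
  simp [insPerm]

lemma insPerm_succAbove (p : Fin (m + 2)) (τ : Equiv.Perm (Fin (m + 1))) (k : Fin (m + 1)) :
    insPerm p τ (p.succAbove k) = Fin.castSucc (τ k) := by
  simp [insPerm, Fin.succAbove_last]

lemma insPerm_lt (p : Fin (m + 2)) (τ : Equiv.Perm (Fin (m + 1))) (k : Fin (m + 2))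
    (hk : k.1 < p.1) : insPerm p τ k = Fin.castSucc (τ ⟨k.1, by omega⟩) := by
  have hk2 : (⟨k.1, by omega⟩ : Fin (m + 1)).castSucc < p := by
    rw [Fin.lt_def]; exact hk
  have e : k = p.succAbove ⟨k.1, by omega⟩ := by
    rw [Fin.succAbove_of_castSucc_lt _ _ hk2]; exact (Fin.ext rfl)
  conv_lhs => rw [e]
  rw [insPerm_succAbove]

lemma insPerm_gt (p : Fin (m + 2)) (τ : Equiv.Perm (Fin (m + 1))) (k : Fin (m + 2))
    (hk : p.1 < k.1) : insPerm p τ k = Fin.castSucc (τ ⟨k.1 - 1, by omega⟩) := by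
  have hk2 : p ≤ (⟨k.1 - 1, by omega⟩ : Fin (m + 1)).castSucc := by
    rw [Fin.le_def]; simp; omega
  have e : k = p.succAbove ⟨k.1 - 1, by omega⟩ := by
    rw [Fin.succAbove_of_le_castSucc _ _ hk2]; exact (Fin.ext (by simp [Fin.succ]; omega))
  conv_lhs => rw [e]
  rw [insPerm_succAbove]

def insBars (p : Fin (m + 2)) (b : Bool) (S : Finset (Fin m)) : Finset (Fin (m + 1)) :=
  (if b then {qp p} else ∅) ∪ S.map (qp p).succAboveEmb

lemma qp_mem_insBars (p : Fin (m + 2)) (b : Bool) (S : Finset (Fin m)) :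
    (qp p ∈ insBars p b S ↔ b = true) := by
  unfold insBars
  cases b <;> simp [Fin.succAboveEmb, eq_comm (a := qp p), Fin.succAbove_ne]

lemma succAbove_mem_insBars (p : Fin (m + 2)) (b : Bool) (S : Finset (Fin m)) (h : Fin m) :
    ((qp p).succAbove h ∈ insBars p b S ↔ h ∈ S) := by
  unfold insBars
  cases b <;> simp [Fin.succAboveEmb, Fin.succAbove_ne, Fin.succAbove_right_injective.eq_iff]

lemma vdes_qp (p : Fin (m + 2)) (τ : Equiv.Perm (Fin (m + 1))) :
    (insPerm p τ (gapR (n := m + 2) (qp p)) < insPerm p τ (gapL (qp p))) ↔ p.1 = 0 := by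
  have hq : (qp p).1 = p.1 - 1 := rfl
  have hLv : (gapL (n := m + 2) (qp p)).1 = p.1 - 1 := rfl
  have hRv : (gapR (n := m + 2) (qp p)).1 = p.1 - 1 + 1 := rfl
  rcases Nat.eq_zero_or_pos p.1 with h0 | h1
  · have hL : gapL (n := m + 2) (qp p) = p := Fin.ext (by omega)
    rw [hL, insPerm_self, insPerm_gt p τ _ (by omega)]
    simp [h0, Fin.castSucc_lt_last]
  · have hR : gapR (n := m + 2) (qp p) = p := Fin.ext (by omega)
    rw [hR, insPerm_self]
    simp [Fin.not_lt.2 (Fin.le_last _)]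
    simp only [Fin.ext_iff, Fin.val_zero]
    omega

lemma vdes_succAbove (p : Fin (m + 2)) (τ : Equiv.Perm (Fin (m + 1))) (h : Fin m) :
    (insPerm p τ (gapR (n := m + 2) ((qp p).succAbove h)) <
      insPerm p τ (gapL ((qp p).succAbove h))) ↔
    (h.1 + 1 = p.1 ∨ τ (gapR (n := m + 1) h) < τ (gapL (n := m + 1) h)) := by
  have hgR : (gapR (n := m + 1) h).1 = h.1 + 1 := rfl
  have hgL : (gapL (n := m + 1) h).1 = h.1 := rfl
  have hhm : h.1 < m := h.2
  rcases lt_or_ge (Fin.castSucc h) (qp p) with hlt | hge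
  · have hv : ((qp p).succAbove h).1 = h.1 := by
      rw [Fin.succAbove_of_castSucc_lt _ _ hlt]; rfl
    have hp2 : h.1 + 1 < p.1 := by
      rw [Fin.lt_def] at hlt; simp [qp] at hlt; omega
    have hLv : (gapL (n := m + 2) ((qp p).succAbove h)).1 = h.1 := hv
    have hRv : (gapR (n := m + 2) ((qp p).succAbove h)).1 = h.1 + 1 := by
      show ((qp p).succAbove h).1 + 1 = h.1 + 1; omega
    rw [insPerm_lt p τ _ (by omega), insPerm_lt p τ _ (by omega),
      Fin.castSucc_lt_castSucc_iff]
    have e1 : (⟨(gapR (n := m + 2) ((qp p).succAbove h)).1, by omega⟩ : Fin (m + 1))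
        = gapR (n := m + 1) h := Fin.ext (by simp [hgR]; omega)
    have e2 : (⟨(gapL (n := m + 2) ((qp p).succAbove h)).1, by omega⟩ : Fin (m + 1))
        = gapL (n := m + 1) h := Fin.ext (by simp [hgL]; omega)
    rw [e1, e2]
    constructor
    · exact Or.inr
    · intro hh; rcases hh with hh | hh
      · omega
      · exact hh
  · have hv : ((qp p).succAbove h).1 = h.1 + 1 := by
      rw [Fin.succAbove_of_le_castSucc _ _ hge]; rfl
    have hp2 : p.1 ≤ h.1 + 1 := by
      rw [Fin.le_def] at hge; simp [qp] at hge; omega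
    have hLv : (gapL (n := m + 2) ((qp p).succAbove h)).1 = h.1 + 1 := hv
    have hRv : (gapR (n := m + 2) ((qp p).succAbove h)).1 = h.1 + 2 := by
      show ((qp p).succAbove h).1 + 1 = h.1 + 2; omega
    rcases Nat.eq_or_lt_of_le hp2 with heq | hlt2
    · have hLp : gapL (n := m + 2) ((qp p).succAbove h) = p := Fin.ext (by omega)
      rw [hLp, insPerm_self, insPerm_gt p τ _ (by omega)]
      simp [Fin.castSucc_lt_last]
      omega
    · rw [insPerm_gt p τ _ (by omega), insPerm_gt p τ _ (by omega),
        Fin.castSucc_lt_castSucc_iff]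
      have e1 : (⟨(gapR (n := m + 2) ((qp p).succAbove h)).1 - 1, by omega⟩ : Fin (m + 1))
          = gapR (n := m + 1) h := Fin.ext (by simp [hgR]; omega)
      have e2 : (⟨(gapL (n := m + 2) ((qp p).succAbove h)).1 - 1, by omega⟩ : Fin (m + 1))
          = gapL (n := m + 1) h := Fin.ext (by simp [hgL]; omega)
      rw [e1, e2]
      constructor
      · exact Or.inr
      · intro hh; rcases hh with hh | hh
        · omega
        · exact hh

def Φ (z : SegPerm (m + 1)) (w : Fin (m + 2) × Bool) : SegPerm (m + 2) :=
  (insPerm w.1 z.1, insBars w.1 w.2 z.2)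

def Dd (τ : Equiv.Perm (Fin (m + 1))) (S : Finset (Fin m)) (p : Fin (m + 2)) (b : Bool) : ℕ :=
  if h1 : p.1 = 0 then (if b then 0 else 1)
  else if h2 : p.1 = m + 1 then 0
  else if (⟨p.1 - 1, by have := p.2; omega⟩ : Fin m) ∈ S ∨
      τ (gapR (n := m + 1) ⟨p.1 - 1, by have := p.2; omega⟩) <
        τ (gapL (n := m + 1) ⟨p.1 - 1, by have := p.2; omega⟩) then 0 else 1

lemma segNum_Φ (τ : Equiv.Perm (Fin (m + 1))) (S : Finset (Fin m)) (p : Fin (m + 2)) (b : Bool) :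
    segNum (Φ (τ, S) (p, b)) = S.card + (if b then 1 else 0) := by
  show (insBars p b S).card = _
  unfold insBars
  cases b
  · simp
  · rw [Finset.card_union_of_disjoint (by simp [Fin.succAboveEmb, eq_comm (a := qp p), Fin.succAbove_ne])]
    simp [Nat.add_comm]

lemma card_filter_univ_split (P : Fin (m + 1) → Prop) [DecidablePred P] (x : Fin (m + 1)) :
    ((univ : Finset (Fin (m + 1))).filter P).card
      = (if P x then 1 else 0) + ∑ h : Fin m, (if P (x.succAbove h) then 1 else 0) := by
  rw [Finset.card_filter, Fin.sum_univ_succAbove _ x]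

lemma desNum_Φ (τ : Equiv.Perm (Fin (m + 1))) (S : Finset (Fin m)) (p : Fin (m + 2)) (b : Bool) :
    desNum (Φ (τ, S) (p, b)) = desNum ((τ, S) : SegPerm (m + 1)) + Dd τ S p b := by
  have hdes : desNum ((τ, S) : SegPerm (m + 1))
      = ∑ h : Fin m, (if h ∉ S ∧ τ (gapR (n := m + 1) h) < τ (gapL h) then 1 else 0) := by
    show ((univ : Finset (Fin (m + 1 - 1))).filter _).card = _
    rw [Finset.card_filter]
    rfl
  have hL : desNum (Φ (τ, S) (p, b))
      = (if (¬ b = true ∧ p.1 = 0) then 1 else 0)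
        + ∑ h : Fin m, (if h ∉ S ∧ (h.1 + 1 = p.1 ∨ τ (gapR (n := m + 1) h) < τ (gapL h))
            then 1 else 0) := by
    show ((univ : Finset (Fin (m + 2 - 1))).filter (fun g =>
        g ∉ insBars p b S ∧ insPerm p τ (gapR g) < insPerm p τ (gapL g))).card = _
    rw [card_filter_univ_split _ (qp p)]
    congr 1
    · simp only [qp_mem_insBars, vdes_qp p τ]
    · apply Finset.sum_congr rfl
      intro h _
      simp only [succAbove_mem_insBars, vdes_succAbove p τ h]
  rw [hL, hdes]
  rcases Nat.eq_zero_or_pos p.1 with hp0 | hp1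
  · have hno : ∀ h : Fin m, ¬ (h.1 + 1 = p.1) := by intro h; omega
    have : ∀ h : Fin m,
        (if h ∉ S ∧ (h.1 + 1 = p.1 ∨ τ (gapR (n := m + 1) h) < τ (gapL h)) then 1 else 0)
          = (if h ∉ S ∧ τ (gapR (n := m + 1) h) < τ (gapL h) then 1 else 0) := by
      intro h; simp [hno h]
    rw [Finset.sum_congr rfl (fun h _ => this h)]
    unfold Dd
    rw [dif_pos hp0]
    cases b <;> simp [hp0] <;> omega
  · rcases Nat.lt_or_ge p.1 (m + 1) with hpm | hpM
    · -- interior case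
      set h₀ : Fin m := ⟨p.1 - 1, by omega⟩ with hh₀
      have key : ∀ h : Fin m,
          (if h ∉ S ∧ (h.1 + 1 = p.1 ∨ τ (gapR (n := m + 1) h) < τ (gapL h)) then 1 else 0)
            = (if h ∉ S ∧ τ (gapR (n := m + 1) h) < τ (gapL h) then 1 else 0)
              + (if h = h₀ then
                  (if h₀ ∉ S ∧ ¬ τ (gapR (n := m + 1) h₀) < τ (gapL h₀) then 1 else 0) else 0) := by
        intro h
        by_cases he : h = h₀
        · rw [if_pos he, ← he]
          have hv : h.1 + 1 = p.1 := by rw [he]; simp [hh₀]; omega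
          by_cases hS : h ∈ S <;> by_cases hd : τ (gapR (n := m + 1) h) < τ (gapL h) <;>
            simp [hv, hS, hd]
        · have hv : ¬ (h.1 + 1 = p.1) := by
            intro hc
            apply he; apply Fin.ext; simp [hh₀]; omega
          simp [hv, he]
      rw [Finset.sum_congr rfl (fun h _ => key h), Finset.sum_add_distrib,
        Fintype.sum_ite_eq' h₀]
      have hb0 : (if (¬ b = true ∧ p.1 = 0) then 1 else 0) = 0 := by simp; simp only [Fin.ext_iff, Fin.val_zero]; omega
      rw [hb0]
      unfold Dd
      rw [dif_neg (by omega), dif_neg (by omega), ← hh₀]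
      by_cases hS : h₀ ∈ S <;> by_cases hd : τ (gapR (n := m + 1) h₀) < τ (gapL h₀) <;>
        simp [hS, hd] <;> omega
    · -- p = last
      have hpe : p.1 = m + 1 := by have := p.2; omega
      have hno : ∀ h : Fin m, ¬ (h.1 + 1 = p.1) := by intro h; have := h.2; omega
      have : ∀ h : Fin m,
          (if h ∉ S ∧ (h.1 + 1 = p.1 ∨ τ (gapR (n := m + 1) h) < τ (gapL h)) then 1 else 0)
            = (if h ∉ S ∧ τ (gapR (n := m + 1) h) < τ (gapL h) then 1 else 0) := by
        intro h; simp [hno h]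
      rw [Finset.sum_congr rfl (fun h _ => this h)]
      unfold Dd
      rw [dif_neg (by omega), dif_pos hpe]
      simp; simp only [Fin.ext_iff, Fin.val_zero]; omega

lemma Φ_injective : Function.Injective (fun x : SegPerm (m + 1) × (Fin (m + 2) × Bool) =>
    Φ x.1 x.2) := by
  rintro ⟨⟨τ₁, S₁⟩, ⟨p₁, b₁⟩⟩ ⟨⟨τ₂, S₂⟩, ⟨p₂, b₂⟩⟩ hx
  simp only [Φ, Prod.mk.injEq] at hx
  obtain ⟨hperm, hbars⟩ := hx
  have hp : p₁ = p₂ := by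
    have h1 : insPerm p₁ τ₁ p₁ = Fin.last (m + 1) := insPerm_self _ _
    have h2 : insPerm p₂ τ₂ p₂ = Fin.last (m + 1) := insPerm_self _ _
    rw [hperm] at h1
    exact (Equiv.injective _) (h1.trans h2.symm)
  subst hp
  have hτ : τ₁ = τ₂ := by
    apply Equiv.ext
    intro k
    have h1 := insPerm_succAbove p₁ τ₁ k
    have h2 := insPerm_succAbove p₁ τ₂ k
    rw [hperm, h2] at h1
    exact Fin.castSucc_injective _ h1.symm
  have hb : b₁ = b₂ := by
    have h1 := qp_mem_insBars p₁ b₁ S₁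
    have h2 := qp_mem_insBars p₁ b₂ S₂
    rw [hbars, h2] at h1
    cases b₁ <;> cases b₂ <;> simp_all
  have hS : S₁ = S₂ := by
    apply Finset.ext
    intro h
    have h1 := succAbove_mem_insBars p₁ b₁ S₁ h
    have h2 := succAbove_mem_insBars p₁ b₂ S₂ h
    rw [hbars, h2] at h1
    rw [← h1]
  simp [hτ, hb, hS]

lemma card_eq_aux :
    Fintype.card (SegPerm (m + 1) × (Fin (m + 2) × Bool)) = Fintype.card (SegPerm (m + 2)) := by
  simp only [Fintype.card_prod, Fintype.card_perm, Fintype.card_finset, Fintype.card_fin,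
    Fintype.card_bool]
  show Nat.factorial (m + 1) * 2 ^ (m + 1 - 1) * ((m + 2) * 2)
      = Nat.factorial (m + 2) * 2 ^ (m + 2 - 1)
  rw [Nat.factorial_succ (m + 1)]
  have e1 : m + 1 - 1 = m := rfl
  have e2 : m + 2 - 1 = m + 1 := rfl
  rw [e1, e2, pow_succ]
  ring

lemma Φ_bijective : Function.Bijective (fun x : SegPerm (m + 1) × (Fin (m + 2) × Bool) =>
    Φ x.1 x.2) :=
  (Fintype.bijective_iff_injective_and_card _).2 ⟨Φ_injective, card_eq_aux⟩

lemma transfer (P : SegPerm (m + 2) → Prop) [DecidablePred P] :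
    (((univ : Finset (SegPerm (m + 2))).filter P).card : ℤ)
      = ∑ z : SegPerm (m + 1), ∑ w : Fin (m + 2) × Bool, (if P (Φ z w) then (1 : ℤ) else 0) := by
  rw [Finset.card_filter]
  push_cast
  rw [← Function.Bijective.sum_comp Φ_bijective (fun x => if P x then (1 : ℤ) else 0)]
  rw [Fintype.sum_prod_type]

variable (τ : Equiv.Perm (Fin (m + 1))) (S : Finset (Fin m))

lemma Dd_le (p : Fin (m + 2)) (b : Bool) : Dd τ S p b ≤ 1 := by
  unfold Dd; split_ifs <;> omega

lemma Dd_zero (b : Bool) : Dd τ S 0 b = if b then 0 else 1 := by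
  unfold Dd
  rw [dif_pos (by simp)]

lemma Dd_last (b : Bool) : Dd τ S (Fin.last (m + 1)) b = 0 := by
  unfold Dd; rw [dif_neg (by simp [Fin.last]), dif_pos (by simp [Fin.last])]

lemma Dd_mid (h : Fin m) (b : Bool) :
    Dd τ S (Fin.castSucc h.succ) b
      = if (h ∈ S ∨ τ (gapR (n := m + 1) h) < τ (gapL h)) then 0 else 1 := by
  have hv : (Fin.castSucc (Fin.succ h)).1 = h.1 + 1 := rfl
  have hm : h.1 < m := h.2
  unfold Dd
  rw [dif_neg (by omega), dif_neg (by omega)]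
  have e : (⟨(Fin.castSucc (Fin.succ h)).1 - 1, by omega⟩ : Fin m) = h := Fin.ext (by simp [hv])
  rw [e]

lemma cnt0 (b : Bool) :
    ∑ p : Fin (m + 2), (if Dd τ S p b = 0 then (1 : ℤ) else 0)
      = ((univ.filter (fun h : Fin m =>
          h ∈ S ∨ τ (gapR (n := m + 1) h) < τ (gapL h))).card : ℤ)
        + 1 + (if b then 1 else 0) := by
  rw [Fin.sum_univ_succAbove _ (Fin.last (m + 1))]
  simp only [Fin.succAbove_last]
  rw [Fin.sum_univ_succAbove _ (0 : Fin (m + 1))]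
  simp only [Fin.succAbove_zero]
  rw [Dd_last, Fin.castSucc_zero, Dd_zero]
  have : ∀ h : Fin m, (if Dd τ S (Fin.castSucc (Fin.succ h)) b = 0 then (1 : ℤ) else 0)
      = (if (h ∈ S ∨ τ (gapR (n := m + 1) h) < τ (gapL h)) then 1 else 0) := by
    intro h
    rw [Dd_mid]
    split_ifs with hc <;> simp_all
  erw [Finset.sum_congr rfl (fun h _ => this h)]
  rw [Finset.card_filter]
  push_cast [apply_ite]
  cases b <;> simp <;> ring

lemma cnt1 (b : Bool) :
    ∑ p : Fin (m + 2), (if Dd τ S p b = 1 then (1 : ℤ) else 0)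
      = ((univ.filter (fun h : Fin m =>
          ¬(h ∈ S ∨ τ (gapR (n := m + 1) h) < τ (gapL h)))).card : ℤ)
        + (if b then 0 else 1) := by
  rw [Fin.sum_univ_succAbove _ (Fin.last (m + 1))]
  simp only [Fin.succAbove_last]
  rw [Fin.sum_univ_succAbove _ (0 : Fin (m + 1))]
  simp only [Fin.succAbove_zero]
  rw [Dd_last, Fin.castSucc_zero, Dd_zero]
  have : ∀ h : Fin m, (if Dd τ S (Fin.castSucc (Fin.succ h)) b = 1 then (1 : ℤ) else 0)
      = (if ¬(h ∈ S ∨ τ (gapR (n := m + 1) h) < τ (gapL h)) then 1 else 0) := by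
    intro h
    rw [Dd_mid]
    split_ifs with hc <;> simp_all
  erw [Finset.sum_congr rfl (fun h _ => this h)]
  rw [Finset.card_filter]
  push_cast [apply_ite]
  cases b <;> simp <;> ring

lemma a_split :
    ((univ.filter (fun h : Fin m =>
        h ∈ S ∨ τ (gapR (n := m + 1) h) < τ (gapL h))).card : ℕ)
      = desNum ((τ, S) : SegPerm (m + 1)) + S.card := by
  have hdes : desNum ((τ, S) : SegPerm (m + 1))
      = ∑ h : Fin m, (if h ∉ S ∧ τ (gapR (n := m + 1) h) < τ (gapL h) then 1 else 0) := by
    show ((univ : Finset (Fin (m + 1 - 1))).filter _).card = _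
    rw [Finset.card_filter]
    rfl
  have hS : S.card = ∑ h : Fin m, (if h ∈ S then 1 else 0) := by
    rw [← Finset.card_filter]
    congr 1
    ext h
    simp
  rw [hdes, hS, Finset.card_filter, ← Finset.sum_add_distrib]
  apply Finset.sum_congr rfl
  intro h _
  by_cases hS' : h ∈ S <;> by_cases hd : τ (gapR (n := m + 1) h) < τ (gapL h) <;>
    simp [hS', hd]

lemma a_compl :
    ((univ.filter (fun h : Fin m =>
        h ∈ S ∨ τ (gapR (n := m + 1) h) < τ (gapL h))).card : ℕ)
      + ((univ.filter (fun h : Fin m =>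
          ¬(h ∈ S ∨ τ (gapR (n := m + 1) h) < τ (gapL h)))).card : ℕ) = m := by
  rw [Finset.card_filter_add_card_filter_not]
  simp

lemma bsum (b : Bool) (i j : ℤ) :
    ∑ p : Fin (m + 2),
        (if ((desNum ((τ, S) : SegPerm (m + 1)) + Dd τ S p b : ℕ) : ℤ) = i ∧
            ((S.card + (if b then 1 else 0) : ℕ) : ℤ) = j then (1 : ℤ) else 0)
      = if ((S.card + (if b then 1 else 0) : ℕ) : ℤ) = j then
          (if (desNum ((τ, S) : SegPerm (m + 1)) : ℤ) = i then
            ((univ.filter (fun h : Fin m =>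
              h ∈ S ∨ τ (gapR (n := m + 1) h) < τ (gapL h))).card : ℤ) + 1
              + (if b then 1 else 0)
          else if (desNum ((τ, S) : SegPerm (m + 1)) : ℤ) = i - 1 then
            ((univ.filter (fun h : Fin m =>
              ¬(h ∈ S ∨ τ (gapR (n := m + 1) h) < τ (gapL h)))).card : ℤ)
              + (if b then 0 else 1)
          else 0)
        else 0 := by
  by_cases hj : ((S.card + (if b then 1 else 0) : ℕ) : ℤ) = j
  · rw [if_pos hj]
    by_cases hi0 : (desNum ((τ, S) : SegPerm (m + 1)) : ℤ) = i
    · rw [if_pos hi0, ← cnt0 τ S b]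
      apply Finset.sum_congr rfl
      intro p _
      have hD := Dd_le τ S p b
      congr 1
      simp only [eq_iff_iff]
      constructor
      · rintro ⟨h1, -⟩; omega
      · intro h1; exact ⟨by omega, hj⟩
    · rw [if_neg hi0]
      by_cases hi1 : (desNum ((τ, S) : SegPerm (m + 1)) : ℤ) = i - 1
      · rw [if_pos hi1, ← cnt1 τ S b]
        apply Finset.sum_congr rfl
        intro p _
        have hD := Dd_le τ S p b
        congr 1
        simp only [eq_iff_iff]
        constructor
        · rintro ⟨h1, -⟩; omega
        · intro h1; exact ⟨by omega, hj⟩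
      · rw [if_neg hi1]
        apply Finset.sum_eq_zero
        intro p _
        have hD := Dd_le τ S p b
        rw [if_neg]
        rintro ⟨h1, -⟩
        omega
  · rw [if_neg hj]
    apply Finset.sum_eq_zero
    intro p _
    rw [if_neg]
    rintro ⟨-, h2⟩
    exact hj h2

set_option maxHeartbeats 1600000 in
lemma fiber (z : SegPerm (m + 1)) (i j : ℤ) :
    ∑ w : Fin (m + 2) × Bool,
        (if (desNum (Φ z w) : ℤ) = i ∧ (segNum (Φ z w) : ℤ) = j then (1 : ℤ) else 0)
      = (if (desNum z : ℤ) = i ∧ (segNum z : ℤ) = j then i + j + 1 else 0)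
        + (if (desNum z : ℤ) = i ∧ (segNum z : ℤ) = j - 1 then i + j + 1 else 0)
        + (if (desNum z : ℤ) = i - 1 ∧ (segNum z : ℤ) = j then (m + 2 : ℤ) - i - j else 0)
        + (if (desNum z : ℤ) = i - 1 ∧ (segNum z : ℤ) = j - 1 then (m + 2 : ℤ) - i - j else 0) := by
  obtain ⟨τ, S⟩ := z
  rw [Fintype.sum_prod_type]
  have hrw : ∀ (p : Fin (m + 2)) (b : Bool),
      (if (desNum (Φ (τ, S) (p, b)) : ℤ) = i ∧ (segNum (Φ (τ, S) (p, b)) : ℤ) = j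
        then (1 : ℤ) else 0)
      = (if ((desNum ((τ, S) : SegPerm (m + 1)) + Dd τ S p b : ℕ) : ℤ) = i ∧
            ((S.card + (if b then 1 else 0) : ℕ) : ℤ) = j then (1 : ℤ) else 0) := by
    intro p b
    rw [desNum_Φ, segNum_Φ]
  have hsum : ∀ p : Fin (m + 2), ∑ b : Bool,
      (if (desNum (Φ (τ, S) (p, b)) : ℤ) = i ∧ (segNum (Φ (τ, S) (p, b)) : ℤ) = j
        then (1 : ℤ) else 0)
      = (if ((desNum ((τ, S) : SegPerm (m + 1)) + Dd τ S p true : ℕ) : ℤ) = i ∧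
            ((S.card + (if (true : Bool) then 1 else 0) : ℕ) : ℤ) = j then (1 : ℤ) else 0)
        + (if ((desNum ((τ, S) : SegPerm (m + 1)) + Dd τ S p false : ℕ) : ℤ) = i ∧
            ((S.card + (if (false : Bool) then 1 else 0) : ℕ) : ℤ) = j then (1 : ℤ) else 0) := by
    intro p
    rw [Fintype.sum_bool, hrw p true, hrw p false]
  rw [Finset.sum_congr rfl (fun p _ => hsum p), Finset.sum_add_distrib,
    bsum τ S true i j, bsum τ S false i j]
  have ha := a_split τ S
  have hc := a_compl τ S
  have hseg : segNum ((τ, S) : SegPerm (m + 1)) = S.card := rfl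
  rw [hseg]
  set i' := desNum ((τ, S) : SegPerm (m + 1)) with hi'
  set A := ((univ.filter (fun h : Fin m =>
      h ∈ S ∨ τ (gapR (n := m + 1) h) < τ (gapL h))).card : ℕ)
  set C := ((univ.filter (fun h : Fin m =>
      ¬(h ∈ S ∨ τ (gapR (n := m + 1) h) < τ (gapL h)))).card : ℕ)
  split_ifs <;> push_cast <;> first | omega | simp_all

end KRec
namespace KRec

lemma sumK (c : SegPerm (m + 1) → Prop) [DecidablePred c] (A : ℤ) :
    (∑ z : SegPerm (m + 1), if c z then A else 0) = ((univ.filter c).card : ℤ) * A := by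
  rw [← Finset.sum_filter, Finset.sum_const, nsmul_eq_mul]

lemma main (i j : ℤ) :
    Kint (m + 2) i j
      = (i + j + 1) * (Kint (m + 1) i j + Kint (m + 1) i (j - 1))
        + ((m + 2 : ℤ) - i - j) * (Kint (m + 1) (i - 1) j + Kint (m + 1) (i - 1) (j - 1)) := by
  show (((univ : Finset (SegPerm (m + 2))).filter
      (fun π => (desNum π : ℤ) = i ∧ (segNum π : ℤ) = j)).card : ℤ) = _
  rw [transfer (fun π => (desNum π : ℤ) = i ∧ (segNum π : ℤ) = j)]
  rw [Finset.sum_congr rfl (fun z _ => fiber z i j)]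
  rw [Finset.sum_add_distrib, Finset.sum_add_distrib, Finset.sum_add_distrib]
  rw [sumK _ (i + j + 1), sumK _ (i + j + 1), sumK _ ((m + 2 : ℤ) - i - j),
    sumK _ ((m + 2 : ℤ) - i - j)]
  show Kint (m + 1) i j * (i + j + 1) + Kint (m + 1) i (j - 1) * (i + j + 1)
      + Kint (m + 1) (i - 1) j * ((m + 2 : ℤ) - i - j)
      + Kint (m + 1) (i - 1) (j - 1) * ((m + 2 : ℤ) - i - j) = _
  ring

end KRec

/-- the recurrence on `n` for the numbers `K(n,i,j)` (with the
convention that `K` vanishes for negative indices, which holds by definition of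
`Kint`, as does the vanishing for `i + j ≥ n`). -/


theorem Kint_rec_n (n : ℕ) (i j : ℤ) (hn : 0 < n) (hi : 0 ≤ i) (hj : 0 ≤ j)
    (hij : i + j < n) :
    Kint n i j
      = (i + j + 1) * (Kint (n - 1) i j + Kint (n - 1) i (j - 1))
        + ((n : ℤ) - i - j) * (Kint (n - 1) (i - 1) j + Kint (n - 1) (i - 1) (j - 1)) := by
  match n, hn with
  | 1, _ =>
    have hi0 : i = 0 := by omega
    have hj0 : j = 0 := by omega
    subst hi0; subst hj0
    norm_num
    decide
  | (m + 2), _ =>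
    have h1 : m + 2 - 1 = m + 1 := rfl
    rw [h1]
    have := KRec.main (m := m) i j
    rw [this]
    push_cast
    ring
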